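/- Binet formula for dual Horadam quaternions: for every natural number n, Ĝₙ = (A·α̲·αⁿ·(1 + α·ε) − B·β̲·βⁿ·(1 + β·ε))/(α − β), where the computation takes place in the algebra of dual quaternions (dual numbers over ℍ) and ε denotes the dual unit with ε² = 0. -/

import Mathlib

open Quaternion DualNumber TrivSqZeroExt

/-- The Horadam sequence `w(a,b;p,q)`: `w₀ = a`, `w₁ = b`,
`wₙ = p·wₙ₋₁ + q·wₙ₋₂` for `n ≥ 2`. -/
def horadam (a b p q : ℝ) : ℕ → ℝ
  | 0 => a
  | 1 => b
  | n + 2 => p * horadam a b p q (n + 1) + q * horadam a b p q n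

/-- The `n`-th Horadam quaternion `Gₙ = wₙ + wₙ₊₁·i + wₙ₊₂·j + wₙ₊₃·k`. -/
def horadamQ (a b p q : ℝ) (n : ℕ) : ℍ[ℝ] :=
  ⟨horadam a b p q n, horadam a b p q (n + 1), horadam a b p q (n + 2), horadam a b p q (n + 3)⟩

/-- The `n`-th dual Horadam quaternion `Ĝₙ = Gₙ + Gₙ₊₁·ε`, an element of the
dual numbers over `ℍ[ℝ]`, where `ε² = 0`. -/
noncomputable def dualHoradamQ (a b p q : ℝ) (n : ℕ) : DualNumber ℍ[ℝ] :=
  inl (horadamQ a b p q n) + inl (horadamQ a b p q (n + 1)) * ε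

/-- Binet formula for dual Horadam quaternions:
`Ĝₙ = (A·α̲·αⁿ·(1 + α·ε) − B·β̲·βⁿ·(1 + β·ε))/(α − β)`. -/
theorem dualHoradamQ_binet (a b p q : ℝ) (hpq : p ^ 2 + 4 * q > 0)
    (α β A B : ℝ)
    (hα : α = (p + Real.sqrt (p ^ 2 + 4 * q)) / 2)
    (hβ : β = (p - Real.sqrt (p ^ 2 + 4 * q)) / 2)
    (hA : A = b - a * β) (hB : B = b - a * α)
    (αq βq : ℍ[ℝ])
    (hαq : αq = ⟨1, α, α ^ 2, α ^ 3⟩) (hβq : βq = ⟨1, β, β ^ 2, β ^ 3⟩) :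
    ∀ n : ℕ, dualHoradamQ a b p q n =
      (α - β)⁻¹ • ((A * α ^ n) • (inl αq * (1 + α • ε)) -
        (B * β ^ n) • (inl βq * (1 + β • ε))) := by
  have hs : Real.sqrt (p ^ 2 + 4 * q) ^ 2 = p ^ 2 + 4 * q := Real.sq_sqrt hpq.le
  have hsub : α - β = Real.sqrt (p ^ 2 + 4 * q) := by rw [hα, hβ]; ring
  have hne : α - β ≠ 0 := by rw [hsub]; positivity
  have hα2 : α ^ 2 = p * α + q := by
    rw [hα]; field_simp; nlinarith [hs]
  have hβ2 : β ^ 2 = p * β + q := by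
    rw [hβ]; field_simp; nlinarith [hs]
  have H : ∀ n, (α - β) * horadam a b p q n = A * α ^ n - B * β ^ n := by
    intro n
    induction n using Nat.twoStepInduction with
    | zero => simp [horadam, hA, hB]; ring
    | one => simp [horadam, hA, hB]; ring
    | more n ih1 ih2 =>
      have e1 : α ^ (n + 2) = p * α ^ (n + 1) + q * α ^ n := by
        calc α ^ (n + 2) = α ^ n * α ^ 2 := by ring
        _ = p * α ^ (n + 1) + q * α ^ n := by rw [hα2]; ring
      have e2 : β ^ (n + 2) = p * β ^ (n + 1) + q * β ^ n := by
        calc β ^ (n + 2) = β ^ n * β ^ 2 := by ring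
        _ = p * β ^ (n + 1) + q * β ^ n := by rw [hβ2]; ring
      show (α - β) * (p * horadam a b p q (n + 1) + q * horadam a b p q n) = _
      rw [e1, e2]; linear_combination p * ih2 + q * ih1
  have h1 : ∀ n, horadam a b p q n = (α - β)⁻¹ * (A * α ^ n - B * β ^ n) := by
    intro n; field_simp; linarith [H n]
  have hQ : ∀ n, horadamQ a b p q n = (α - β)⁻¹ • ((A * α ^ n) • αq - (B * β ^ n) • βq) := by
    intro n
    ext
    all_goals simp [horadamQ, hαq, hβq, h1 n, h1 (n+1), h1 (n+2), h1 (n+3), pow_succ]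
    all_goals exact Or.inl (by change _ = A * α ^ n * _ - B * β ^ n * _; dsimp only; ring)
  intro n
  refine TrivSqZeroExt.ext ?_ ?_
  · simpa [dualHoradamQ] using hQ n
  · simpa [dualHoradamQ, smul_smul, smul_sub, pow_succ, mul_assoc] using hQ (n+1)
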